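/- Fact 1 (quantum/Tsirelson bound, upper bound part): Let n, m ≥ 1, let A₀, A₁ be Hermitian n×n complex matrices and B₀, B₁ Hermitian m×m complex matrices satisfying A₀² ⪯ Iₙ, A₁² ⪯ Iₙ, B₀² ⪯ Iₘ, B₁² ⪯ Iₘ, and let ρ be a density matrix on ℂⁿ ⊗ ℂᵐ. Then for every a, b ∈ {0,1}, Tr[B̂_{a,b} ρ] ≤ 2. -/

import Mathlib

/-!
Fact 1 (quantum/Tsirelson bound, upper bound part): for Hermitian observables
`A₀, A₁` on `ℂⁿ` and `B₀, B₁` on `ℂᵐ` with squares `⪯ 1`, and any density matrix `ρ`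
on `ℂⁿ ⊗ ℂᵐ`, the Bell operator `B̂_{a,b}` satisfies `Tr[B̂_{a,b} ρ] ≤ 2`.
-/

open Matrix Finset
open scoped Matrix Kronecker ComplexOrder

noncomputable section

/-- `tildeA A 0 = (A₀ - A₁)/√2` and `tildeA A 1 = (A₀ + A₁)/√2`. -/
def tildeA {n : Type*} (A : Fin 2 → Matrix n n ℂ) (j : Fin 2) : Matrix n n ℂ :=
  (Real.sqrt 2 : ℂ)⁻¹ • (A 0 + (-1 : ℂ) ^ ((j : ℕ) + 1) • A 1)

/-- The Bell operator `B̂_{a,b} = (−1)^a (Ã₁ ⊗ B₁ + (−1)^b Ã₀ ⊗ B₀)`. -/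
def BellOp {n m : Type*} (A : Fin 2 → Matrix n n ℂ) (B : Fin 2 → Matrix m m ℂ)
    (a b : Fin 2) : Matrix (n × m) (n × m) ℂ :=
  (-1 : ℂ) ^ (a : ℕ) • (tildeA A 1 ⊗ₖ B 1 + (-1 : ℂ) ^ (b : ℕ) • (tildeA A 0 ⊗ₖ B 0))

section Helpers

set_option linter.unusedSectionVars false

variable {n m : Type*} [Fintype n] [Fintype m] [DecidableEq n] [DecidableEq m]

lemma kron_conjTranspose' (A : Matrix n n ℂ) (B : Matrix m m ℂ) :
    (A ⊗ₖ B)ᴴ = Aᴴ ⊗ₖ Bᴴ := by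
  ext ⟨i,k⟩ ⟨j,l⟩
  simp [conjTranspose_apply, kroneckerMap_apply]

lemma psd_kron {A : Matrix n n ℂ} {B : Matrix m m ℂ} (hA : A.PosSemidef) (hB : B.PosSemidef) :
    (A ⊗ₖ B).PosSemidef := by
  exact hA.kronecker hB

lemma psd_trace_nonneg {M : Matrix n n ℂ} (hM : M.PosSemidef) : 0 ≤ M.trace := by
  apply Finset.sum_nonneg
  intro i _
  have := hM.diag_nonneg (i := i)
  simpa [dotProduct, Pi.single_apply, apply_ite] using this

lemma psd_trace_mul_nonneg {M ρ : Matrix n n ℂ} (hM : M.PosSemidef) (hρ : ρ.PosSemidef) :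
    0 ≤ (M * ρ).trace := by
  open scoped MatrixOrder in
  have h1 : M * ρ = M * (CFC.sqrt ρ * CFC.sqrt ρ) := by rw [CFC.sqrt_mul_sqrt_self ρ hρ.nonneg]
  open scoped MatrixOrder in
  have hs : (CFC.sqrt ρ).IsHermitian := (CFC.sqrt_nonneg ρ).posSemidef.isHermitian
  have h2 : (M * ρ).trace = ((CFC.sqrt ρ)ᴴ * M * CFC.sqrt ρ).trace := by
    rw [h1, ← mul_assoc, trace_mul_cycle, hs.eq, mul_assoc]
  rw [h2]
  exact psd_trace_nonneg (hM.conjTranspose_mul_mul_same _)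

lemma sub_kron (A B : Matrix n n ℂ) (C : Matrix m m ℂ) :
    (A - B) ⊗ₖ C = A ⊗ₖ C - B ⊗ₖ C := by
  ext ⟨i,k⟩ ⟨j,l⟩; simp [kroneckerMap_apply, sub_mul]

lemma kron_sub (A : Matrix n n ℂ) (B C : Matrix m m ℂ) :
    A ⊗ₖ (B - C) = A ⊗ₖ B - A ⊗ₖ C := by
  ext ⟨i,k⟩ ⟨j,l⟩; simp [kroneckerMap_apply, mul_sub]

lemma neg_kron (A : Matrix n n ℂ) (C : Matrix m m ℂ) :
    (-A) ⊗ₖ C = -(A ⊗ₖ C) := by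
  ext ⟨i,k⟩ ⟨j,l⟩; simp [kroneckerMap_apply]

lemma sq_expand {R : Type*} [Ring R] [Algebra ℂ R] (x y : R) (c : ℂ) (h : y * x = x * y) :
    (x - c • y) * (x - c • y) = x * x - (2 * c) • (x * y) + (c * c) • (y * y) := by
  simp only [sub_mul, mul_sub, smul_mul_assoc, mul_smul_comm, smul_smul, h]
  module

lemma key_identity {R : Type*} [Ring R] [Algebra ℂ R] (x0 x1 y0 y1 : R)
    (h00 : y0 * x0 = x0 * y0) (h01 : y1 * x0 = x0 * y1)
    (h10 : y0 * x1 = x1 * y0) (h11 : y1 * x1 = x1 * y1)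
    {c : ℂ} (hc : c * c = 2⁻¹) :
    (1 - x0 * x0) + (1 - x1 * x1) + (1 - y0 * y0) + (1 - y1 * y1)
      + (x0 - c • (y0 + y1)) * (x0 - c • (y0 + y1))
      + (x1 - c • (y1 - y0)) * (x1 - c • (y1 - y0))
    = (4 : ℂ) • 1 - (2 : ℂ) • (c • (x0 * y1 + x1 * y1 + x0 * y0 - x1 * y0)) := by
  have e0 := sq_expand x0 (y0 + y1) c (by simp only [add_mul, mul_add, h00, h01])
  have e1 := sq_expand x1 (y1 - y0) c (by simp only [sub_mul, mul_sub, h10, h11])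
  rw [e0, e1, hc]
  simp only [mul_add, add_mul, mul_sub, sub_mul, smul_add, smul_sub, smul_smul]
  module

set_option maxHeartbeats 1000000 in
lemma tsirelson_core (A0 A1 : Matrix n n ℂ) (B0 B1 : Matrix m m ℂ)
    (hA0 : A0.IsHermitian) (hA1 : A1.IsHermitian)
    (hB0 : B0.IsHermitian) (hB1 : B1.IsHermitian)
    (hA0s : ((1 : Matrix n n ℂ) - A0 ^ 2).PosSemidef)
    (hA1s : ((1 : Matrix n n ℂ) - A1 ^ 2).PosSemidef)
    (hB0s : ((1 : Matrix m m ℂ) - B0 ^ 2).PosSemidef)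
    (hB1s : ((1 : Matrix m m ℂ) - B1 ^ 2).PosSemidef)
    (ρ : Matrix (n × m) (n × m) ℂ) (hρ : ρ.PosSemidef) (hρtr : ρ.trace = 1) :
    (((((Real.sqrt 2 : ℂ))⁻¹ • (A0 + A1)) ⊗ₖ B1
      + (((Real.sqrt 2 : ℂ))⁻¹ • (A0 - A1)) ⊗ₖ B0) * ρ).trace ≤ 2 := by
  set c : ℂ := ((Real.sqrt 2 : ℂ))⁻¹ with hcdef
  have hc : c * c = 2⁻¹ := by
    rw [hcdef, ← mul_inv, ← Complex.ofReal_mul, Real.mul_self_sqrt (by norm_num)]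
    norm_num
  have hcs : star c = c := by rw [hcdef]; simp
  set x0 : Matrix (n × m) (n × m) ℂ := A0 ⊗ₖ (1 : Matrix m m ℂ) with hx0
  set x1 : Matrix (n × m) (n × m) ℂ := A1 ⊗ₖ (1 : Matrix m m ℂ) with hx1
  set y0 : Matrix (n × m) (n × m) ℂ := (1 : Matrix n n ℂ) ⊗ₖ B0 with hy0
  set y1 : Matrix (n × m) (n × m) ℂ := (1 : Matrix n n ℂ) ⊗ₖ B1 with hy1
  have comm : ∀ (A : Matrix n n ℂ) (B : Matrix m m ℂ),
      ((1 : Matrix n n ℂ) ⊗ₖ B) * (A ⊗ₖ (1 : Matrix m m ℂ)) =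
      (A ⊗ₖ (1 : Matrix m m ℂ)) * ((1 : Matrix n n ℂ) ⊗ₖ B) := by
    intro A B
    rw [← Matrix.mul_kronecker_mul, ← Matrix.mul_kronecker_mul, one_mul, mul_one, one_mul, mul_one]
  set Op : Matrix (n × m) (n × m) ℂ :=
    (c • (A0 + A1)) ⊗ₖ B1 + (c • (A0 - A1)) ⊗ₖ B0 with hOp
  have hOp' : Op = c • (x0 * y1 + x1 * y1 + x0 * y0 - x1 * y0) := by
    rw [hOp, hx0, hx1, hy0, hy1]
    simp only [← Matrix.mul_kronecker_mul, one_mul, mul_one]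
    rw [Matrix.smul_kronecker, Matrix.smul_kronecker, add_kronecker, sub_kron, smul_add, smul_sub]
    module
  set P0 : Matrix (n × m) (n × m) ℂ := x0 - c • (y0 + y1) with hP0
  set P1 : Matrix (n × m) (n × m) ℂ := x1 - c • (y1 - y0) with hP1
  have hQ : ((1 : Matrix n n ℂ) - A0 ^ 2) ⊗ₖ (1 : Matrix m m ℂ)
      + ((1 : Matrix n n ℂ) - A1 ^ 2) ⊗ₖ (1 : Matrix m m ℂ)
      + (1 : Matrix n n ℂ) ⊗ₖ ((1 : Matrix m m ℂ) - B0 ^ 2)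
      + (1 : Matrix n n ℂ) ⊗ₖ ((1 : Matrix m m ℂ) - B1 ^ 2)
      + P0 * P0 + P1 * P1
      = (4 : ℂ) • 1 - (2 : ℂ) • Op := by
    have h1 : ((1 : Matrix n n ℂ) - A0 ^ 2) ⊗ₖ (1 : Matrix m m ℂ) = 1 - x0 * x0 := by
      rw [sub_kron, hx0, ← Matrix.mul_kronecker_mul, one_mul, ← pow_two,
        Matrix.one_kronecker_one]
    have h2 : ((1 : Matrix n n ℂ) - A1 ^ 2) ⊗ₖ (1 : Matrix m m ℂ) = 1 - x1 * x1 := by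
      rw [sub_kron, hx1, ← Matrix.mul_kronecker_mul, one_mul, ← pow_two,
        Matrix.one_kronecker_one]
    have h3 : (1 : Matrix n n ℂ) ⊗ₖ ((1 : Matrix m m ℂ) - B0 ^ 2) = 1 - y0 * y0 := by
      rw [kron_sub, hy0, ← Matrix.mul_kronecker_mul, one_mul, ← pow_two,
        Matrix.one_kronecker_one]
    have h4 : (1 : Matrix n n ℂ) ⊗ₖ ((1 : Matrix m m ℂ) - B1 ^ 2) = 1 - y1 * y1 := by
      rw [kron_sub, hy1, ← Matrix.mul_kronecker_mul, one_mul, ← pow_two,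
        Matrix.one_kronecker_one]
    rw [h1, h2, h3, h4, hP0, hP1, hOp']
    exact key_identity x0 x1 y0 y1 (comm A0 B0) (comm A0 B1) (comm A1 B0) (comm A1 B1) hc
  have hP0h : P0.IsHermitian := by
    unfold Matrix.IsHermitian
    rw [hP0, conjTranspose_sub, conjTranspose_smul, hx0, hy0, hy1, ← kronecker_add,
      kron_conjTranspose', kron_conjTranspose', hA0.eq, conjTranspose_add, hB0.eq, hB1.eq,
      conjTranspose_one, conjTranspose_one, kronecker_add, hcs]
  have hP1h : P1.IsHermitian := by
    unfold Matrix.IsHermitian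
    rw [hP1, conjTranspose_sub, conjTranspose_smul, hx1, hy0, hy1, ← kron_sub,
      kron_conjTranspose', kron_conjTranspose', hA1.eq, conjTranspose_sub, hB0.eq, hB1.eq,
      conjTranspose_one, conjTranspose_one, kron_sub, hcs]
  have hQpsd : ((4 : ℂ) • 1 - (2 : ℂ) • Op).PosSemidef := by
    rw [← hQ]
    have hsq : ∀ (P : Matrix (n × m) (n × m) ℂ), P.IsHermitian → (P * P).PosSemidef := by
      intro P hP
      have : P * P = Pᴴ * P := by rw [hP.eq]
      rw [this]; exact posSemidef_conjTranspose_mul_self _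
    exact ((((((psd_kron hA0s Matrix.PosSemidef.one).add
      (psd_kron hA1s Matrix.PosSemidef.one)).add
      (psd_kron Matrix.PosSemidef.one hB0s)).add
      (psd_kron Matrix.PosSemidef.one hB1s)).add
      (hsq P0 hP0h)).add (hsq P1 hP1h))
  have htr : 0 ≤ (((4 : ℂ) • 1 - (2 : ℂ) • Op) * ρ).trace := psd_trace_mul_nonneg hQpsd hρ
  rw [sub_mul, smul_mul_assoc, smul_mul_assoc, one_mul, trace_sub, trace_smul, trace_smul,
    hρtr] at htr
  have htr' : (0 : ℂ) ≤ 4 - 2 * (Op * ρ).trace := by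
    simpa [smul_eq_mul] using htr
  rw [Complex.le_def] at htr' ⊢
  obtain ⟨h1, h2⟩ := htr'
  simp only [Complex.zero_re, Complex.zero_im, Complex.sub_re, Complex.sub_im, Complex.mul_re,
    Complex.mul_im] at h1 h2 ⊢
  norm_num at h1 h2 ⊢
  constructor <;> linarith

end Helpers

set_option maxHeartbeats 1000000 in
theorem quantum_bound_two_party (n m : ℕ) (hn : 1 ≤ n) (hm : 1 ≤ m)
    (A : Fin 2 → Matrix (Fin n) (Fin n) ℂ) (B : Fin 2 → Matrix (Fin m) (Fin m) ℂ)
    (hAh : ∀ x, (A x).IsHermitian) (hBh : ∀ x, (B x).IsHermitian)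
    (hA1 : ∀ x, ((1 : Matrix (Fin n) (Fin n) ℂ) - A x ^ 2).PosSemidef)
    (hB1 : ∀ x, ((1 : Matrix (Fin m) (Fin m) ℂ) - B x ^ 2).PosSemidef)
    (ρ : Matrix (Fin n × Fin m) (Fin n × Fin m) ℂ)
    (hρ : ρ.PosSemidef) (hρtr : ρ.trace = 1)
    (a b : Fin 2) :
    (BellOp A B a b * ρ).trace ≤ 2 := by
  have hEq : ∀ (X Y : Matrix (Fin n) (Fin n) ℂ), BellOp A B a b
      = (((Real.sqrt 2 : ℂ))⁻¹ • (X + Y)) ⊗ₖ B 1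
        + (((Real.sqrt 2 : ℂ))⁻¹ • (X - Y)) ⊗ₖ B 0 →
      (X.IsHermitian) → (Y.IsHermitian) →
      ((1 : Matrix (Fin n) (Fin n) ℂ) - X ^ 2).PosSemidef →
      ((1 : Matrix (Fin n) (Fin n) ℂ) - Y ^ 2).PosSemidef →
      (BellOp A B a b * ρ).trace ≤ 2 := by
    intro X Y h hX hY hXs hYs
    rw [h]
    exact tsirelson_core X Y (B 0) (B 1) hX hY (hBh 0) (hBh 1) hXs hYs (hB1 0) (hB1 1) ρ hρ hρtr
  have hneg : ∀ x, ((1 : Matrix (Fin n) (Fin n) ℂ) - (-(A x)) ^ 2).PosSemidef := by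
    intro x; rw [neg_sq]; exact hA1 x
  fin_cases a <;> fin_cases b
  · refine hEq (A 0) (A 1) ?_ (hAh 0) (hAh 1) (hA1 0) (hA1 1)
    simp only [BellOp, tildeA, Fin.isValue, Fin.val_zero, Fin.val_one, pow_zero, pow_one,
      pow_succ, neg_one_mul, neg_neg, one_smul, neg_one_smul, neg_smul, one_mul, mul_one]
    simp only [smul_kronecker, add_kronecker, sub_kron, neg_kron, smul_add, smul_sub, smul_neg]
    module
  · refine hEq (A 1) (A 0) ?_ (hAh 1) (hAh 0) (hA1 1) (hA1 0)
    simp only [BellOp, tildeA, Fin.isValue, Fin.val_zero, Fin.val_one, pow_zero, pow_one,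
      pow_succ, neg_one_mul, neg_neg, one_smul, neg_one_smul, neg_smul, one_mul, mul_one]
    simp only [smul_kronecker, add_kronecker, sub_kron, neg_kron, smul_add, smul_sub, smul_neg]
    module
  · refine hEq (-(A 0)) (-(A 1)) ?_ (hAh 0).neg (hAh 1).neg (hneg 0) (hneg 1)
    simp only [BellOp, tildeA, Fin.isValue, Fin.val_zero, Fin.val_one, pow_zero, pow_one,
      pow_succ, neg_one_mul, neg_neg, one_smul, neg_one_smul, neg_smul, one_mul, mul_one]
    simp only [smul_kronecker, add_kronecker, sub_kron, neg_kron, smul_add, smul_sub, smul_neg]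
    module
  · refine hEq (-(A 1)) (-(A 0)) ?_ (hAh 1).neg (hAh 0).neg (hneg 1) (hneg 0)
    simp only [BellOp, tildeA, Fin.isValue, Fin.val_zero, Fin.val_one, pow_zero, pow_one,
      pow_succ, neg_one_mul, neg_neg, one_smul, neg_one_smul, neg_smul, one_mul, mul_one]
    simp only [smul_kronecker, add_kronecker, sub_kron, neg_kron, smul_add, smul_sub, smul_neg]
    module

end
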